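/- (Corollary 1, regret part) For IM-OCP with decaying step sizes η_t = c·t^{−β}, where c > 0 and β ∈ (0,1), and independent Bernoulli feedback indicators, if D is a constant such that B_R(u, r_t) ≤ D almost surely for all 1 ≤ t ≤ T, where u is any minimizer of Σ_{t=1}^T ℓ_{1−α}(·, r*_t), then the expected regret satisfies E[ Σ_{t=1}^T ℓ_{1−α}(r_t, r*_t)·obs_t/p_t ] − min_{v ∈ ℝ} Σ_{t=1}^T ℓ_{1−α}(v, r*_t) ≤ (D/c)·T^{β} + (c/(2·μ·p_min)) · ( 1 + T^{1−β}/(1−β) ), where p_min = min_{1 ≤ t ≤ T} p_t; in particular the expected regret is O(T^{max{β, 1−β}}). -/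

import Mathlib

open MeasureTheory ProbabilityTheory

noncomputable def pinball (α r s : ℝ) : ℝ := (α - if r < s then 1 else 0) * (r - s)

lemma pinball_subgrad (α r s v : ℝ) :
    pinball α r s - pinball α v s ≤ (α - if r < s then 1 else 0) * (r - v) := by
  unfold pinball
  by_cases hr : r < s <;> by_cases hv : v < s <;> simp [hr, hv] <;> nlinarith

lemma bregman_lb (R R' : ℝ → ℝ) (hR : ∀ x, HasDerivAt R (R' x) x) (μ : ℝ)
    (hsc : ∀ x y, (R' x - R' y) * (x - y) ≥ μ * (x - y) ^ 2) (x y : ℝ) :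
    μ / 2 * (x - y) ^ 2 ≤ R x - R y - R' y * (x - y) := by
  rcases eq_or_ne x y with rfl | hne
  · simp
  · set g : ℝ → ℝ := fun z => R z - μ / 2 * z ^ 2 with hg
    have hg' : ∀ z, HasDerivAt g (R' z - μ * z) z := by
      intro z
      have h2 : HasDerivAt (fun z : ℝ => μ / 2 * z ^ 2) (μ / 2 * (2 * z)) z :=
        ((hasDerivAt_pow 2 z).const_mul (μ / 2)).congr_deriv (by ring)
      have := (hR z).sub h2
      exact this.congr_deriv (by ring)
    rcases hne.lt_or_gt with h | h
    · obtain ⟨ξ, hξ, hslope⟩ := exists_hasDerivAt_eq_slope g (fun z => R' z - μ * z) h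
        (fun z _ => (hg' z).continuousAt.continuousWithinAt) (fun z _ => hg' z)
      have hgd : g y - g x = (R' ξ - μ * ξ) * (y - x) := by
        rw [hslope, div_mul_cancel₀ _ (sub_ne_zero.mpr h.ne')]
      have h1 : (R' ξ - R' y) * (ξ - y) ≥ μ * (ξ - y) ^ 2 := hsc ξ y
      have hξy : ξ < y := hξ.2
      have : R' ξ - μ * ξ ≤ R' y - μ * y := by nlinarith [sq_nonneg (ξ - y)]
      simp only [hg] at hgd
      nlinarith [mul_le_mul_of_nonneg_right this (by linarith : (0:ℝ) ≤ y - x)]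
    · obtain ⟨ξ, hξ, hslope⟩ := exists_hasDerivAt_eq_slope g (fun z => R' z - μ * z) h
        (fun z _ => (hg' z).continuousAt.continuousWithinAt) (fun z _ => hg' z)
      have hgd : g x - g y = (R' ξ - μ * ξ) * (x - y) := by
        rw [hslope, div_mul_cancel₀ _ (sub_ne_zero.mpr h.ne')]
      have h1 : (R' ξ - R' y) * (ξ - y) ≥ μ * (ξ - y) ^ 2 := hsc ξ y
      have hξy : y < ξ := hξ.1
      have : R' y - μ * y ≤ R' ξ - μ * ξ := by nlinarith [sq_nonneg (ξ - y)]
      simp only [hg] at hgd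
      nlinarith [mul_le_mul_of_nonneg_right this (by linarith : (0:ℝ) ≤ x - y)]

lemma step_alg (μ η q o g a b u Ra Rb Ra' Rb' Ru : ℝ)
    (hμ : 0 < μ) (hη : 0 < η) (hq : 0 < q)
    (ho : o = 0 ∨ o = 1) (hg : g ^ 2 ≤ 1)
    (hupd : Ra' - Rb' = η * (g * o / q))
    (hB : μ / 2 * (b - a) ^ 2 ≤ Rb - Ra - Ra' * (b - a)) :
    g * (a - u) * (o / q) ≤
      1 / η * ((Ru - Ra - Ra' * (u - a)) - (Ru - Rb - Rb' * (u - b))) + η / (2 * μ * q ^ 2) * o := by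
  set G : ℝ := g * o / q with hG
  set d : ℝ := a - b with hd
  have hη' : η ≠ 0 := ne_of_gt hη
  have hq' : q ≠ 0 := ne_of_gt hq
  have hRb' : Rb' = Ra' - η * G := by rw [hG]; linarith
  have hfirst : 1 / η * ((Ru - Ra - Ra' * (u - a)) - (Ru - Rb - Rb' * (u - b)))
      = G * (b - u) + 1 / η * (Rb - Ra - Ra' * (b - a)) := by
    rw [hRb']; field_simp; ring
  have hL : g * (a - u) * (o / q) = G * d + G * (b - u) := by rw [hG, hd]; ring
  have hG2 : G ^ 2 ≤ o / q ^ 2 := by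
    rw [hG, div_pow]
    apply div_le_div_of_nonneg_right _ (by positivity)
    rcases ho with h | h
    · simp [h]
    · simpa [h] using hg
  have ho' : 0 ≤ o := by rcases ho with h | h <;> simp [h]
  rw [hL, hfirst]
  have h2 : G * d ≤ μ * d ^ 2 / (2 * η) + η * G ^ 2 / (2 * μ) := by
    rw [div_add_div _ _ (by positivity) (by positivity), le_div_iff₀ (by positivity)]
    nlinarith [sq_nonneg (η * G - μ * d)]
  have h3 : η * G ^ 2 / (2 * μ) ≤ η / (2 * μ * q ^ 2) * o := by
    calc η * G ^ 2 / (2 * μ) ≤ η * (o / q ^ 2) / (2 * μ) := by gcongr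
      _ = η / (2 * μ * q ^ 2) * o := by
          rw [mul_div_assoc', div_div, mul_comm (q ^ 2) (2 * μ), div_mul_eq_mul_div]
  have h4 : μ * d ^ 2 / (2 * η) ≤ 1 / η * (Rb - Ra - Ra' * (b - a)) := by
    have := mul_le_mul_of_nonneg_left hB (by positivity : (0:ℝ) ≤ 1 / η)
    calc μ * d ^ 2 / (2 * η) = 1 / η * (μ / 2 * (b - a) ^ 2) := by rw [hd]; field_simp; ring
      _ ≤ _ := this
  linarith

lemma abel_tele (φ Bq : ℕ → ℝ) (D : ℝ) :
    ∀ T : ℕ, 1 ≤ T → (∀ t, 1 ≤ t → φ t ≤ φ (t + 1)) → (∀ t, 0 ≤ φ t) → (∀ t, 0 ≤ Bq t) →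
      (∀ t, 1 ≤ t → t ≤ T → Bq t ≤ D) →
      ∑ t ∈ Finset.Icc 1 T, φ t * (Bq t - Bq (t + 1)) ≤ D * φ T - φ T * Bq (T + 1) := by
  intro T
  induction T with
  | zero => intro h; omega
  | succ n ih =>
    intro _ hmono hφ hB0 hBD
    rcases Nat.eq_zero_or_pos n with hn | hn
    · subst hn
      simp only [Finset.Icc_self, Finset.sum_singleton, zero_add]
      have h2 := hBD 1 le_rfl le_rfl
      nlinarith [mul_nonneg (hφ 1) (sub_nonneg.mpr h2)]
    · rw [Finset.sum_Icc_succ_top (by omega : 1 ≤ n + 1)]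
      have hih := ih hn hmono hφ hB0 (fun t ht ht' => hBD t ht (le_trans ht' (Nat.le_succ n)))
      have h2 : Bq (n + 1) ≤ D := hBD (n + 1) (by omega) le_rfl
      have h3 : φ n ≤ φ (n + 1) := hmono n hn
      nlinarith [mul_nonneg (sub_nonneg.mpr h3) (sub_nonneg.mpr h2), hB0 (n + 2), hφ (n + 1)]

lemma rpow_anti {x y β : ℝ} (hx : 0 < x) (hxy : x ≤ y) (hβ : 0 ≤ β) :
    y ^ (-β) ≤ x ^ (-β) := by
  rw [Real.rpow_neg hx.le, Real.rpow_neg (hx.trans_le hxy).le]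
  exact inv_anti₀ (Real.rpow_pos_of_pos hx β) (Real.rpow_le_rpow hx.le hxy hβ)

lemma sum_rpow_le (β : ℝ) (hβ0 : 0 < β) (hβ1 : β < 1) :
    ∀ T : ℕ, 1 ≤ T →
      ∑ t ∈ Finset.Icc 1 T, ((t : ℝ)) ^ (-β) ≤ 1 + ((T : ℝ) ^ (1 - β) - 1) / (1 - β) := by
  have h1β : (0:ℝ) < 1 - β := by linarith
  intro T
  induction T with
  | zero => intro h; omega
  | succ n ih =>
    intro _
    rcases Nat.eq_zero_or_pos n with hn | hn
    · subst hn; norm_num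
    · rw [Finset.sum_Icc_succ_top (by omega : 1 ≤ n + 1)]
      have hih := ih hn
      have hnpos : (0:ℝ) < n := by exact_mod_cast hn
      have hlt : (n:ℝ) < (n:ℝ) + 1 := by linarith
      have hderiv : ∀ x ∈ Set.Ioo (n:ℝ) ((n:ℝ)+1),
          HasDerivAt (fun z : ℝ => z ^ (1 - β)) ((1 - β) * x ^ (-β)) x := by
        intro x hx
        have hx0 : x ≠ 0 := ne_of_gt (lt_trans hnpos hx.1)
        have := Real.hasDerivAt_rpow_const (x := x) (p := 1 - β) (Or.inl hx0)
        convert this using 2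
        ring_nf
      have hcont : ContinuousOn (fun z : ℝ => z ^ (1 - β)) (Set.Icc (n:ℝ) ((n:ℝ)+1)) := by
        intro x hx
        have hx0 : x ≠ 0 := ne_of_gt (lt_of_lt_of_le hnpos hx.1)
        exact (Real.continuousAt_rpow_const x (1 - β) (Or.inl hx0)).continuousWithinAt
      obtain ⟨ξ, hξ, hslope⟩ := exists_hasDerivAt_eq_slope (fun z : ℝ => z ^ (1 - β))
        (fun x => (1 - β) * x ^ (-β)) hlt hcont hderiv
      have hξpos : (0:ℝ) < ξ := lt_trans hnpos hξ.1
      have hmono : ((n:ℝ)+1) ^ (-β) ≤ ξ ^ (-β) := rpow_anti hξpos hξ.2.le hβ0.le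
      have hslope' : ((n:ℝ)+1) ^ (1-β) - (n:ℝ) ^ (1-β) = (1 - β) * ξ ^ (-β) := by
        rw [hslope]; norm_num
      have hkey : ((n:ℝ)+1) ^ (-β) ≤ (((n:ℝ)+1) ^ (1-β) - (n:ℝ) ^ (1-β)) / (1 - β) := by
        rw [hslope', mul_comm (1-β) (ξ ^ (-β)), mul_div_assoc, div_self (ne_of_gt h1β), mul_one]
        exact hmono
      push_cast
      calc (∑ t ∈ Finset.Icc 1 n, ((t:ℝ)) ^ (-β)) + ((n:ℝ)+1) ^ (-β)
          ≤ (1 + ((n:ℝ) ^ (1 - β) - 1) / (1 - β)) + (((n:ℝ)+1) ^ (1-β) - (n:ℝ) ^ (1-β)) / (1 - β) := by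
            push_cast at hih; linarith
        _ = 1 + (((n:ℝ)+1) ^ (1 - β) - 1) / (1 - β) := by field_simp; ring

set_option maxHeartbeats 2000000 in
/-- Corollary 1 (regret part): for IM-OCP with decaying step sizes `η_t = c t^{-β}`,
`β ∈ (0,1)`, and independent Bernoulli feedback, if `u` minimizes the cumulative quantile
loss and `B_R(u, r_t) ≤ D` almost surely for `1 ≤ t ≤ T`, then the expected regret is at
most `(D/c) T^β + (c/(2 μ p_min)) (1 + T^{1-β}/(1-β))`, which is `O(T^{max{β,1-β}})`. -/
theorem imocp_corollary_regret
    {Ω : Type*} [MeasurableSpace Ω] (Pr : Measure Ω) [IsProbabilityMeasure Pr]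
    (B α μ D c β : ℝ) (hB : 0 < B) (hα : α ∈ Set.Icc (0 : ℝ) 1) (hμ : 0 < μ)
    (hc : 0 < c) (hβ : β ∈ Set.Ioo (0 : ℝ) 1)
    (rstar p : ℕ → ℝ)
    (hrstar : ∀ t, rstar t ∈ Set.Icc 0 B)
    (hp : ∀ t, p t ∈ Set.Ioc (0 : ℝ) 1)
    (obs : ℕ → Ω → ℝ)
    (hobsmeas : ∀ t, Measurable (obs t))
    (hobs01 : ∀ t ω, obs t ω = 0 ∨ obs t ω = 1)
    (hindep : iIndepFun obs Pr)
    (hobsp : ∀ t, Pr {ω | obs t ω = 1} = ENNReal.ofReal (p t))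
    (R R' : ℝ → ℝ)
    (hR : ∀ x, HasDerivAt R (R' x) x)
    (hbij : Function.Bijective R')
    (hsc : ∀ x y, (R' x - R' y) * (x - y) ≥ μ * (x - y) ^ 2)
    (r E : ℕ → Ω → ℝ)
    (hrmeas : ∀ t, Measurable (r t))
    (hE : ∀ t ω, E t ω = if rstar t > r t ω then 1 else 0)
    (hr1 : ∀ ω, r 1 ω ∈ Set.Icc 0 B)
    (hupd : ∀ t, 1 ≤ t → ∀ ω,
      R' (r (t + 1) ω) =
        R' (r t ω) - c * (t : ℝ) ^ (-β) * (α - E t ω) * obs t ω / p t)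
    (T : ℕ) (hT : 1 ≤ T)
    (u : ℝ)
    (hu : ∀ v : ℝ, ∑ t ∈ Finset.Icc 1 T, pinball α u (rstar t) ≤
      ∑ t ∈ Finset.Icc 1 T, pinball α v (rstar t))
    (hD : ∀ t ∈ Finset.Icc 1 T, ∀ᵐ ω ∂Pr,
      R u - R (r t ω) - R' (r t ω) * (u - r t ω) ≤ D) :
    (∫ ω, ∑ t ∈ Finset.Icc 1 T, pinball α (r t ω) (rstar t) * obs t ω / p t ∂Pr) -
        ∑ t ∈ Finset.Icc 1 T, pinball α u (rstar t) ≤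
      (D / c) * (T : ℝ) ^ β +
        (c / (2 * μ * ((Finset.Icc 1 T).inf' (Finset.nonempty_Icc.mpr hT) p))) *
          (1 + (T : ℝ) ^ (1 - β) / (1 - β)) := by
  obtain ⟨hα0, hα1⟩ := hα
  obtain ⟨hβ0, hβ1⟩ := hβ
  set pm : ℝ := (Finset.Icc 1 T).inf' (Finset.nonempty_Icc.mpr hT) p with hpmdef
  have hpm_pos : 0 < pm := by
    rw [hpmdef]
    exact (Finset.lt_inf'_iff _).mpr (fun t _ => (hp t).1)
  have hpm_le : ∀ t ∈ Finset.Icc 1 T, pm ≤ p t := fun t ht => Finset.inf'_le p ht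
  -- step sizes and inverse step sizes
  set φ : ℕ → ℝ := fun t => 1 / (c * (t : ℝ) ^ (-β)) with hφdef
  set Bu : ℕ → Ω → ℝ := fun t ω => R u - R (r t ω) - R' (r t ω) * (u - r t ω) with hBudef
  have hobs_nonneg : ∀ t ω, 0 ≤ obs t ω := by
    intro t ω; rcases hobs01 t ω with h | h <;> simp [h]
  have hobs_le1 : ∀ t ω, obs t ω ≤ 1 := by
    intro t ω; rcases hobs01 t ω with h | h <;> simp [h]
  -- per step pointwise inequality
  have key : ∀ t ∈ Finset.Icc 1 T, ∀ ω : Ω,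
      pinball α (r t ω) (rstar t) * obs t ω / p t
        - pinball α u (rstar t) * (obs t ω / p t)
      ≤ φ t * (Bu t ω - Bu (t + 1) ω)
        + c * (t : ℝ) ^ (-β) / (2 * μ * (p t) ^ 2) * obs t ω := by
    intro t ht ω
    have ht1 : 1 ≤ t := (Finset.mem_Icc.mp ht).1
    have htpos : (0:ℝ) < (t:ℝ) := by exact_mod_cast ht1
    have hη : 0 < c * (t:ℝ) ^ (-β) := by positivity
    have hq := (hp t).1
    have hg2 : (α - if r t ω < rstar t then 1 else 0) ^ 2 ≤ 1 := by
      split <;> nlinarith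
    have hupd' : R' (r t ω) - R' (r (t+1) ω)
        = (c * (t:ℝ) ^ (-β)) * ((α - if r t ω < rstar t then 1 else 0) * obs t ω / p t) := by
      rw [hupd t ht1 ω, hE t ω]
      simp only [gt_iff_lt]
      ring
    have hBba := bregman_lb R R' hR μ hsc (r (t+1) ω) (r t ω)
    have hstep := step_alg μ (c * (t:ℝ) ^ (-β)) (p t) (obs t ω)
      (α - if r t ω < rstar t then 1 else 0) (r t ω) (r (t+1) ω) u
      (R (r t ω)) (R (r (t+1) ω)) (R' (r t ω)) (R' (r (t+1) ω)) (R u)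
      hμ hη hq (hobs01 t ω) hg2 hupd' hBba
    have hsub := pinball_subgrad α (r t ω) (rstar t) u
    have ho' : 0 ≤ obs t ω / p t := div_nonneg (hobs_nonneg t ω) hq.le
    have h1 : (pinball α (r t ω) (rstar t) - pinball α u (rstar t)) * (obs t ω / p t)
        ≤ ((α - if r t ω < rstar t then 1 else 0) * (r t ω - u)) * (obs t ω / p t) :=
      mul_le_mul_of_nonneg_right hsub ho'
    have hφt : φ t = 1 / (c * (t:ℝ) ^ (-β)) := by rw [hφdef]
    have hBut : Bu t ω = R u - R (r t ω) - R' (r t ω) * (u - r t ω) := by rw [hBudef]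
    have hBut1 : Bu (t+1) ω = R u - R (r (t+1) ω) - R' (r (t+1) ω) * (u - r (t+1) ω) := by
      rw [hBudef]
    have hLeq : pinball α (r t ω) (rstar t) * obs t ω / p t
        - pinball α u (rstar t) * (obs t ω / p t)
        = (pinball α (r t ω) (rstar t) - pinball α u (rstar t)) * (obs t ω / p t) := by ring
    rw [hLeq, hφt, hBut, hBut1]
    exact le_trans h1 hstep
  -- almost-everywhere pointwise total bound
  have hae : ∀ᵐ ω ∂Pr,
      (∑ t ∈ Finset.Icc 1 T, pinball α (r t ω) (rstar t) * obs t ω / p t)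
        - (∑ t ∈ Finset.Icc 1 T, pinball α u (rstar t) * (obs t ω / p t))
      ≤ D * φ T + ∑ t ∈ Finset.Icc 1 T,
          c * (t : ℝ) ^ (-β) / (2 * μ * (p t) ^ 2) * obs t ω := by
    have hDall : ∀ᵐ ω ∂Pr, ∀ t ∈ Finset.Icc 1 T, Bu t ω ≤ D := by
      rw [Finset.eventually_all]
      intro t ht
      filter_upwards [hD t ht] with ω hω
      rw [hBudef]
      exact hω
    filter_upwards [hDall] with ω hDω
    rw [← Finset.sum_sub_distrib]
    have hφmono : ∀ t : ℕ, 1 ≤ t → φ t ≤ φ (t + 1) := by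
      intro t ht
      have htpos : (0:ℝ) < (t:ℝ) := by exact_mod_cast ht
      have h1 : ((t:ℝ) + 1) ^ (-β) ≤ (t:ℝ) ^ (-β) := rpow_anti htpos (by linarith) hβ0.le
      have h1' : (((t+1 : ℕ)):ℝ) ^ (-β) ≤ (t:ℝ) ^ (-β) := by push_cast; exact h1
      have hpos1 : (0:ℝ) < c * (((t+1:ℕ)):ℝ) ^ (-β) := by
        have : (0:ℝ) < ((t+1:ℕ):ℝ) := by push_cast; linarith
        positivity
      rw [hφdef]
      exact one_div_le_one_div_of_le hpos1 (by nlinarith)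
    have hφ0 : ∀ t : ℕ, 0 ≤ φ t := by
      intro t; rw [hφdef]
      positivity
    have hBu0 : ∀ t : ℕ, 0 ≤ Bu t ω := by
      intro t
      have := bregman_lb R R' hR μ hsc u (r t ω)
      have hb : Bu t ω = R u - R (r t ω) - R' (r t ω) * (u - r t ω) := rfl
      rw [hb]
      nlinarith [sq_nonneg (u - r t ω)]
    have habel := abel_tele φ (fun t => Bu t ω) D T hT hφmono hφ0 hBu0
      (fun t ht ht' => hDω t (Finset.mem_Icc.mpr ⟨ht, ht'⟩))
    have htel : ∑ t ∈ Finset.Icc 1 T, φ t * (Bu t ω - Bu (t + 1) ω) ≤ D * φ T :=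
      le_trans habel (by nlinarith [mul_nonneg (hφ0 T) (hBu0 (T + 1))])
    calc ∑ t ∈ Finset.Icc 1 T,
          (pinball α (r t ω) (rstar t) * obs t ω / p t
            - pinball α u (rstar t) * (obs t ω / p t))
        ≤ ∑ t ∈ Finset.Icc 1 T,
            (φ t * (Bu t ω - Bu (t + 1) ω)
              + c * (t : ℝ) ^ (-β) / (2 * μ * (p t) ^ 2) * obs t ω) :=
          Finset.sum_le_sum (fun t ht => key t ht ω)
      _ = (∑ t ∈ Finset.Icc 1 T, φ t * (Bu t ω - Bu (t + 1) ω))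
            + ∑ t ∈ Finset.Icc 1 T, c * (t : ℝ) ^ (-β) / (2 * μ * (p t) ^ 2) * obs t ω :=
          Finset.sum_add_distrib
      _ ≤ _ := by linarith
  -- integral facts
  have hint_obs : ∀ t, Integrable (obs t) Pr := by
    intro t
    refine ⟨(hobsmeas t).aestronglyMeasurable, ?_⟩
    apply HasFiniteIntegral.of_bounded (C := 1)
    filter_upwards with ω
    rw [Real.norm_eq_abs, abs_le]
    exact ⟨by linarith [hobs_nonneg t ω], hobs_le1 t ω⟩
  have hobs_int_eq : ∀ t, ∫ ω, obs t ω ∂Pr = p t := by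
    intro t
    have hA : MeasurableSet {ω | obs t ω = 1} := (hobsmeas t) (measurableSet_singleton 1)
    have heq : ∀ ω, obs t ω = ({ω | obs t ω = 1}).indicator (fun _ => (1:ℝ)) ω := by
      intro ω
      rcases hobs01 t ω with h | h
      · rw [h, Set.indicator_of_notMem]
        simp only [Set.mem_setOf_eq, h]
        norm_num
      · rw [h, Set.indicator_of_mem]
        exact h
    rw [integral_congr_ae (Filter.Eventually.of_forall heq), integral_indicator_const _ hA,
      measureReal_def, hobsp t, smul_eq_mul, mul_one, ENNReal.toReal_ofReal (hp t).1.le]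
  -- boundedness of iterates
  have hrbd : ∀ t, 1 ≤ t → ∃ M : ℝ, ∀ ω, |r t ω| ≤ M := by
    intro t ht
    induction t, ht using Nat.le_induction with
    | base => exact ⟨B, fun ω => abs_le.mpr ⟨by linarith [(hr1 ω).1], (hr1 ω).2⟩⟩
    | succ n hn ihn =>
      obtain ⟨M, hM⟩ := ihn
      refine ⟨M + c * (n:ℝ) ^ (-β) / (μ * p n), fun ω => ?_⟩
      have hnpos : (0:ℝ) < (n:ℝ) := by exact_mod_cast hn
      have hη : 0 < c * (n:ℝ) ^ (-β) := by positivity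
      have hq := (hp n).1
      have hdiff : R' (r n ω) - R' (r (n+1) ω)
          = c * (n:ℝ) ^ (-β) * (α - E n ω) * obs n ω / p n := by
        rw [hupd n hn ω]; ring
      have hgo : |(α - E n ω) * obs n ω| ≤ 1 := by
        rcases hobs01 n ω with h | h
        · rw [h, mul_zero, abs_zero]; norm_num
        · rw [h, mul_one, hE n ω, abs_le]
          split <;> constructor <;> linarith
      have hRd : |R' (r n ω) - R' (r (n+1) ω)| ≤ c * (n:ℝ) ^ (-β) / p n := by
        rw [hdiff]
        have hre : c * (n:ℝ) ^ (-β) * (α - E n ω) * obs n ω / p n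
            = (c * (n:ℝ) ^ (-β)) * ((α - E n ω) * obs n ω) / p n := by ring
        rw [hre, abs_div, abs_of_pos hq, abs_mul, abs_of_pos hη]
        apply div_le_div_of_nonneg_right _ hq.le
        simpa using mul_le_mul_of_nonneg_left hgo hη.le
      have h1 : μ * (r n ω - r (n+1) ω) ^ 2
          ≤ (c * (n:ℝ) ^ (-β) / p n) * |r n ω - r (n+1) ω| := by
        have h2 := hsc (r n ω) (r (n+1) ω)
        have h3 : (R' (r n ω) - R' (r (n+1) ω)) * (r n ω - r (n+1) ω)
            ≤ |R' (r n ω) - R' (r (n+1) ω)| * |r n ω - r (n+1) ω| := by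
          calc _ ≤ |(R' (r n ω) - R' (r (n+1) ω)) * (r n ω - r (n+1) ω)| := le_abs_self _
            _ = _ := abs_mul _ _
        have h4 := mul_le_mul_of_nonneg_right hRd (abs_nonneg (r n ω - r (n+1) ω))
        linarith
      have hab : |r n ω - r (n+1) ω| ≤ c * (n:ℝ) ^ (-β) / (μ * p n) := by
        rcases (abs_nonneg (r n ω - r (n+1) ω)).eq_or_lt with h0 | h0
        · rw [← h0]; positivity
        · have h5 : (μ * |r n ω - r (n+1) ω|) * |r n ω - r (n+1) ω|
              ≤ (c * (n:ℝ) ^ (-β) / p n) * |r n ω - r (n+1) ω| := by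
            nlinarith [sq_abs (r n ω - r (n+1) ω)]
          have h6 := le_of_mul_le_mul_right h5 h0
          rw [mul_comm μ (p n), ← div_div, le_div_iff₀ hμ]
          linarith
      have hba : r (n+1) ω = r n ω + (r (n+1) ω - r n ω) := by ring
      calc |r (n+1) ω| = |r n ω + (r (n+1) ω - r n ω)| := by rw [← hba]
        _ ≤ |r n ω| + |r (n+1) ω - r n ω| := abs_add_le _ _
        _ ≤ M + c * (n:ℝ) ^ (-β) / (μ * p n) := by
            refine add_le_add (hM ω) ?_
            rwa [abs_sub_comm]
  -- integrability of the loss terms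
  have hint1 : ∀ t ∈ Finset.Icc 1 T,
      Integrable (fun ω => pinball α (r t ω) (rstar t) * obs t ω / p t) Pr := by
    intro t ht
    have ht1 : 1 ≤ t := (Finset.mem_Icc.mp ht).1
    obtain ⟨M, hM⟩ := hrbd t ht1
    have hq := (hp t).1
    have hmeas : Measurable (fun ω => pinball α (r t ω) (rstar t) * obs t ω / p t) := by
      apply Measurable.div_const
      apply Measurable.mul _ (hobsmeas t)
      have hpe : (fun ω => pinball α (r t ω) (rstar t))
          = fun ω => (α - if r t ω < rstar t then 1 else 0) * (r t ω - rstar t) := rfl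
      rw [hpe]
      exact (measurable_const.sub (Measurable.ite
        (measurableSet_lt (hrmeas t) measurable_const) measurable_const measurable_const)).mul
        ((hrmeas t).sub measurable_const)
    refine ⟨hmeas.aestronglyMeasurable, ?_⟩
    apply HasFiniteIntegral.of_bounded (C := (α + 1) * (M + B) / p t)
    filter_upwards with ω
    have hMnn : 0 ≤ M := le_trans (abs_nonneg _) (hM ω)
    have hpb : |pinball α (r t ω) (rstar t)| ≤ (α + 1) * (M + B) := by
      have h1 : |α - if r t ω < rstar t then 1 else 0| ≤ α + 1 := by
        split <;> rw [abs_le] <;> constructor <;> linarith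
      have h2 : |r t ω - rstar t| ≤ M + B := by
        have h3 := abs_le.mp (hM ω)
        have h4 := (hrstar t).1
        have h5 := (hrstar t).2
        rw [abs_le]; constructor <;> linarith
      have he : pinball α (r t ω) (rstar t)
          = (α - if r t ω < rstar t then 1 else 0) * (r t ω - rstar t) := rfl
      rw [he, abs_mul]
      exact mul_le_mul h1 h2 (abs_nonneg _) (by linarith)
    rw [Real.norm_eq_abs, abs_div, abs_of_pos hq]
    apply div_le_div_of_nonneg_right _ hq.le
    rw [abs_mul, abs_of_nonneg (hobs_nonneg t ω)]
    calc |pinball α (r t ω) (rstar t)| * obs t ω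
        ≤ ((α + 1) * (M + B)) * 1 :=
          mul_le_mul hpb (hobs_le1 t ω) (hobs_nonneg t ω) (by positivity)
      _ = (α + 1) * (M + B) := mul_one _
  have hint2 : ∀ t, Integrable (fun ω => pinball α u (rstar t) * (obs t ω / p t)) Pr :=
    fun t => (((hint_obs t).div_const (p t)).const_mul _)
  have hint3 : ∀ t : ℕ, Integrable
      (fun ω => c * (t : ℝ) ^ (-β) / (2 * μ * (p t) ^ 2) * obs t ω) Pr :=
    fun t => (hint_obs t).const_mul _
  -- compute the integral of the comparison terms
  have hH : ∫ ω, (∑ t ∈ Finset.Icc 1 T, pinball α u (rstar t) * (obs t ω / p t)) ∂Pr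
      = ∑ t ∈ Finset.Icc 1 T, pinball α u (rstar t) := by
    rw [integral_finset_sum _ (fun t _ => hint2 t)]
    refine Finset.sum_congr rfl (fun t _ => ?_)
    rw [integral_const_mul, integral_div, hobs_int_eq t,
      div_self (ne_of_gt (hp t).1), mul_one]
  -- main integral inequality
  have hmain : (∫ ω, ∑ t ∈ Finset.Icc 1 T, pinball α (r t ω) (rstar t) * obs t ω / p t ∂Pr)
      - ∑ t ∈ Finset.Icc 1 T, pinball α u (rstar t)
      ≤ D * φ T + ∑ t ∈ Finset.Icc 1 T, c * (t : ℝ) ^ (-β) / (2 * μ * p t) := by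
    have hintF : Integrable
        (fun ω => ∑ t ∈ Finset.Icc 1 T, pinball α (r t ω) (rstar t) * obs t ω / p t) Pr :=
      integrable_finset_sum _ hint1
    have hintH : Integrable
        (fun ω => ∑ t ∈ Finset.Icc 1 T, pinball α u (rstar t) * (obs t ω / p t)) Pr :=
      integrable_finset_sum _ (fun t _ => hint2 t)
    have hintK : Integrable
        (fun ω => ∑ t ∈ Finset.Icc 1 T, c * (t : ℝ) ^ (-β) / (2 * μ * (p t) ^ 2) * obs t ω) Pr :=
      integrable_finset_sum _ (fun t _ => hint3 t)
    rw [← hH, ← integral_sub hintF hintH]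
    have hle := integral_mono_ae (hintF.sub hintH) ((integrable_const (D * φ T)).add hintK) hae
    calc _ ≤ ∫ ω, (D * φ T + ∑ t ∈ Finset.Icc 1 T,
            c * (t : ℝ) ^ (-β) / (2 * μ * (p t) ^ 2) * obs t ω) ∂Pr := hle
      _ = D * φ T + ∑ t ∈ Finset.Icc 1 T,
            c * (t : ℝ) ^ (-β) / (2 * μ * (p t) ^ 2) * p t := by
          rw [integral_add (integrable_const _) hintK, integral_const,
            integral_finset_sum _ (fun t _ => hint3 t)]
          simp only [measureReal_def, measure_univ, ENNReal.toReal_one, smul_eq_mul, one_mul]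
          congr 1
          exact Finset.sum_congr rfl (fun t _ => by rw [integral_const_mul, hobs_int_eq t])
      _ = D * φ T + ∑ t ∈ Finset.Icc 1 T, c * (t : ℝ) ^ (-β) / (2 * μ * p t) := by
          congr 1
          refine Finset.sum_congr rfl (fun t _ => ?_)
          have hq := (hp t).1.ne'
          have hμ' := hμ.ne'
          field_simp
  -- final arithmetic
  have hφT : D * φ T = (D / c) * (T : ℝ) ^ β := by
    have hTpos : (0:ℝ) < (T:ℝ) := by exact_mod_cast hT
    have hTb : (0:ℝ) < (T:ℝ) ^ β := Real.rpow_pos_of_pos hTpos β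
    simp only [hφdef]
    rw [Real.rpow_neg hTpos.le]
    field_simp
  have htail : ∑ t ∈ Finset.Icc 1 T, c * (t : ℝ) ^ (-β) / (2 * μ * p t)
      ≤ (c / (2 * μ * pm)) * (1 + (T : ℝ) ^ (1 - β) / (1 - β)) := by
    have h1β : (0:ℝ) < 1 - β := by linarith
    have h1 : ∀ t ∈ Finset.Icc 1 T,
        c * (t:ℝ) ^ (-β) / (2 * μ * p t) ≤ (c / (2 * μ * pm)) * (t:ℝ) ^ (-β) := by
      intro t ht
      have ht1 : 1 ≤ t := (Finset.mem_Icc.mp ht).1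
      have htpos : (0:ℝ) < (t:ℝ) := by exact_mod_cast ht1
      have hx : (0:ℝ) < (t:ℝ) ^ (-β) := Real.rpow_pos_of_pos htpos _
      have hple := hpm_le t ht
      calc c * (t:ℝ) ^ (-β) / (2 * μ * p t) ≤ c * (t:ℝ) ^ (-β) / (2 * μ * pm) := by
            gcongr
        _ = (c / (2 * μ * pm)) * (t:ℝ) ^ (-β) := by ring
    calc ∑ t ∈ Finset.Icc 1 T, c * (t:ℝ) ^ (-β) / (2 * μ * p t)
        ≤ ∑ t ∈ Finset.Icc 1 T, (c / (2 * μ * pm)) * (t:ℝ) ^ (-β) := Finset.sum_le_sum h1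
      _ = (c / (2 * μ * pm)) * ∑ t ∈ Finset.Icc 1 T, ((t:ℝ)) ^ (-β) := by
          rw [← Finset.mul_sum]
      _ ≤ (c / (2 * μ * pm)) * (1 + ((T:ℝ) ^ (1 - β) - 1) / (1 - β)) :=
          mul_le_mul_of_nonneg_left (sum_rpow_le β hβ0 hβ1 T hT) (by positivity)
      _ ≤ (c / (2 * μ * pm)) * (1 + (T:ℝ) ^ (1 - β) / (1 - β)) := by
          apply mul_le_mul_of_nonneg_left _ (by positivity)
          rw [sub_div]
          have h2 : 0 ≤ 1 / (1 - β) := by positivity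
          linarith
  calc _ ≤ D * φ T + ∑ t ∈ Finset.Icc 1 T, c * (t : ℝ) ^ (-β) / (2 * μ * p t) := hmain
    _ ≤ (D / c) * (T : ℝ) ^ β + (c / (2 * μ * pm)) * (1 + (T : ℝ) ^ (1 - β) / (1 - β)) := by
        rw [hφT] at *; linarith [htail]
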